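/- arXiv:1805.01878 — 6 statements merged into one kernel-verified Lean document; each statement's English description precedes it below -/
import Mathlib

section
/- For each KPP reaction function f, as u_c → 1⁻ the propagation speed satisfies v*(u_c) ~ |f'(1)|^{1/2} (1 − u_c); that is, the quotient v*(u_c) / ((1 − u_c) |f'(1)|^{1/2}) tends to 1 as u_c → 1⁻. -/
open Real Filter Topology

/-- A KPP reaction function: `f ∈ C¹`, `f 0 = f 1 = 0`, `f' 0 = 1`, `f' 1 < 0`,
`0 < f u ≤ u` on `(0,1)` and `f u < 0` for `u > 1`. -/
def IsKPP (f : ℝ → ℝ) : Prop :=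
  ContDiff ℝ 1 f ∧ f 0 = 0 ∧ f 1 = 0 ∧ deriv f 0 = 1 ∧ deriv f 1 < 0 ∧
  (∀ u : ℝ, 0 < u → u < 1 → 0 < f u ∧ f u ≤ u) ∧
  (∀ u : ℝ, 1 < u → f u < 0)

/-- The cut-off reaction function: `f_c u = f u` for `u > u_c`, and `0` for `u ≤ u_c`. -/
noncomputable def cutoff (f : ℝ → ℝ) (uc : ℝ) : ℝ → ℝ :=
  fun u => if uc < u then f u else 0

/-- A permanent form travelling wave solution with cut-off `uc` and speed `v`. -/
def IsPTW (f : ℝ → ℝ) (uc v : ℝ) (U : ℝ → ℝ) : Prop :=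
  ContDiff ℝ 1 U ∧
  (∀ y : ℝ, y ≠ 0 → ContDiffAt ℝ 2 U y) ∧
  (∀ y : ℝ, y ≠ 0 → deriv (deriv U) y + v * deriv U y + cutoff f uc (U y) = 0) ∧
  U 0 = uc ∧
  (∀ y : ℝ, y < 0 → uc ≤ U y ∧ U y ≤ 1) ∧
  (∀ y : ℝ, 0 < y → 0 ≤ U y ∧ U y ≤ uc) ∧
  Tendsto U atBot (𝓝 1) ∧
  Tendsto U atTop (𝓝 0)


open Set
lemma constOn_Ioi {φ : ℝ → ℝ} (hcont : Continuous φ)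
    (hder : ∀ y ∈ Set.Ioi (0:ℝ), HasDerivAt φ 0 y) :
    ∀ y ∈ Set.Ioi (0:ℝ), φ y = φ 1 := by
  intro y hy
  rcases le_total y 1 with h | h
  · have := constant_of_has_deriv_right_zero (f := φ) (a := y) (b := 1)
      hcont.continuousOn (fun x hx => (hder x (lt_of_lt_of_le hy hx.1)).hasDerivWithinAt)
    exact (this 1 ⟨h, le_rfl⟩).symm
  · have := constant_of_has_deriv_right_zero (f := φ) (a := 1) (b := y)
      hcont.continuousOn (fun x hx => (hder x (lt_of_lt_of_le one_pos hx.1)).hasDerivWithinAt)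
    exact this y ⟨h, le_rfl⟩

lemma differentiableAt_deriv_of_contDiffAt {U : ℝ → ℝ} {y : ℝ} (h : ContDiffAt ℝ 2 U y) :
    DifferentiableAt ℝ (deriv U) y := by
  have h1 : ContDiffAt ℝ 1 (fderiv ℝ U) y := h.fderiv_right (by norm_num)
  have h2 : ContDiffAt ℝ 1 (fun x => fderiv ℝ U x 1) y := h1.clm_apply contDiffAt_const
  have h3 : (fun x => fderiv ℝ U x 1) = deriv U := funext fun x => rfl
  rw [h3] at h2
  exact h2.differentiableAt one_ne_zero

lemma sqrt_ge_two_gamma {v γ sq : ℝ} (h0 : 0 ≤ sq) (h2 : sq ^ 2 = v ^ 2 + 4 * γ ^ 2)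
    (hγ : 0 ≤ γ) : 2 * γ ≤ sq := by nlinarith [sq_nonneg v]

lemma sqrt_ge_v {v γ sq : ℝ} (h0 : 0 ≤ sq) (h2 : sq ^ 2 = v ^ 2 + 4 * γ ^ 2)
    (hv : 0 ≤ v) : v ≤ sq := by nlinarith [sq_nonneg γ]

lemma final_lower_bound {γ v uc lp : ℝ} (h1 : lp * (1 - uc) ≤ v * uc) (h2 : γ - v / 2 ≤ lp)
    (huc1 : uc ≤ 1) (hv : 0 ≤ v) : γ * (1 - uc) ≤ v := by
  nlinarith [mul_le_mul_of_nonneg_right h2 (by linarith : (0:ℝ) ≤ 1 - uc)]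

set_option maxHeartbeats 1000000 in
lemma ptw_speed_bounds (f : ℝ → ℝ) (hfc : Continuous f) {uc v γ G : ℝ}
    (huc0 : 0 < uc) (huc1 : uc < 1) (hγ : 0 < γ) (hG : 0 < G) (hv : 0 ≤ v)
    (hlow : ∀ u, uc ≤ u → u ≤ 1 → γ ^ 2 * (1 - u) ≤ f u)
    (hhigh : ∀ u, uc ≤ u → u ≤ 1 → f u ≤ G ^ 2 * (1 - u))
    {U : ℝ → ℝ} (hU : IsPTW f uc v U) :
    γ * (1 - uc) ≤ v ∧ v * uc ≤ G * (1 - uc) := by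
  obtain ⟨hC1, hC2, hODE, hU0, hneg, hpos, hbot, htop⟩ := hU
  have contU : Continuous U := hC1.continuous
  have contU' : Continuous (deriv U) := hC1.continuous_deriv le_rfl
  have hdiff : ∀ y : ℝ, HasDerivAt U (deriv U y) y :=
    fun y => (hC1.differentiable one_ne_zero y).hasDerivAt
  have hdiff2 : ∀ y : ℝ, y ≠ 0 → HasDerivAt (deriv U) (deriv (deriv U) y) y :=
    fun y hy => (differentiableAt_deriv_of_contDiffAt (hC2 y hy)).hasDerivAt
  have hfpos : ∀ u, uc ≤ u → u ≤ 1 → 0 ≤ f u := by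
    intro u h1 h2
    have := hlow u h1 h2
    nlinarith
  have hcut0 : ∀ u : ℝ, u ≤ uc → cutoff f uc u = 0 := by
    intro u hu; simp [cutoff, not_lt.mpr hu]
  have hcutf : ∀ u : ℝ, uc < u → cutoff f uc u = f u := by
    intro u hu; simp [cutoff, hu]
  have hU'' : ∀ y : ℝ, y ≠ 0 →
      deriv (deriv U) y = -(v * deriv U y) - cutoff f uc (U y) := by
    intro y hy; have := hODE y hy; linarith
  -- second derivative vanishes on the right (for the cutoff term)
  have hU''r : ∀ y : ℝ, 0 < y → deriv (deriv U) y = -(v * deriv U y) := by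
    intro y hy
    rw [hU'' y hy.ne', hcut0 _ (hpos y hy).2, sub_zero]
  -- Step A : the speed is positive
  have hv0 : 0 < v := by
    rcases hv.lt_or_eq with h | h
    · exact h
    exfalso
    have hveq : v = 0 := h.symm
    have hder0 : ∀ y ∈ Set.Ioi (0:ℝ), HasDerivAt (deriv U) 0 y := by
      intro y hy
      have h2 := hdiff2 y hy.ne'
      rwa [hU''r y hy, hveq, zero_mul, neg_zero] at h2
    have hc : ∀ y ∈ Set.Ioi (0:ℝ), deriv U y = deriv U 1 := constOn_Ioi contU' hder0
    set c := deriv U 1 with hcdef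
    have hPhi : ∀ y ∈ Set.Ioi (0:ℝ), U y - c * y = U 1 - c * 1 := by
      apply constOn_Ioi (φ := fun z : ℝ => U z - c * z) (contU.sub (continuous_const.mul continuous_id))
      intro y hy
      have h1 : HasDerivAt (fun z : ℝ => U z - c * z) (deriv U y - c * 1) y :=
        (hdiff y).sub ((hasDerivAt_id y).const_mul c)
      rw [hc y hy] at h1
      simpa using h1
    have hUy : ∀ y ∈ Set.Ioi (0:ℝ), U y = c * y + (U 1 - c * 1) := by
      intro y hy; have := hPhi y hy; linarith
    have hev : U =ᶠ[atTop] fun y => c * y + (U 1 - c * 1) := by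
      filter_upwards [eventually_gt_atTop (0:ℝ)] with y hy
      exact hUy y hy
    have hf0 : Tendsto (fun y : ℝ => c * y + (U 1 - c * 1)) atTop (𝓝 0) := htop.congr' hev
    have hshift : Tendsto (fun y : ℝ => c * (y + 1) + (U 1 - c * 1)) atTop (𝓝 0) :=
      hf0.comp (tendsto_atTop_add_const_right _ 1 tendsto_id)
    have hcc : Tendsto (fun y : ℝ => (c * (y + 1) + (U 1 - c * 1)) - (c * y + (U 1 - c * 1)))
        atTop (𝓝 (0 - 0)) := hshift.sub hf0
    have hfun : (fun y : ℝ => (c * (y + 1) + (U 1 - c * 1)) - (c * y + (U 1 - c * 1)))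
        = fun _ => c := by funext y; ring
    rw [hfun] at hcc
    have hceq : c = 0 := by
      have := tendsto_nhds_unique tendsto_const_nhds hcc; simpa using this
    have hdeq : U 1 - c * 1 = 0 := by
      have hfun2 : (fun y : ℝ => c * y + (U 1 - c * 1)) = fun _ => U 1 - c * 1 := by
        funext y; rw [hceq]; ring
      rw [hfun2] at hf0
      exact tendsto_nhds_unique tendsto_const_nhds hf0
    have hU0' : Tendsto U (𝓝[>] (0:ℝ)) (𝓝 (U 0)) :=
      (contU.tendsto 0).mono_left nhdsWithin_le_nhds
    have hev2 : U =ᶠ[𝓝[>] (0:ℝ)] fun _ => (0:ℝ) := by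
      filter_upwards [self_mem_nhdsWithin] with y hy
      rw [hUy y hy, hceq]; rw [hceq] at hdeq; linarith
    have hU00 : U 0 = 0 := tendsto_nhds_unique (hU0'.congr' hev2) tendsto_const_nhds
    rw [hU0] at hU00; linarith
  -- Step B : derivative matching at 0
  have hexpc : ∀ b : ℝ, Continuous (fun z : ℝ => Real.exp (b * z)) := by
    intro b; exact Real.continuous_exp.comp (continuous_const.mul continuous_id)
  have hexpd : ∀ (b y : ℝ), HasDerivAt (fun z : ℝ => Real.exp (b * z)) (Real.exp (b * y) * b) y := by
    intro b y
    have h1 : HasDerivAt (fun z : ℝ => b * z) (b * 1) y := (hasDerivAt_id y).const_mul b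
    have := (Real.hasDerivAt_exp (b * y)).comp y h1
    exact this.congr_deriv (by ring)
  have hdU0 : deriv U 0 = -(v * uc) := by
    set c := deriv U 1 * Real.exp (v * 1) with hcdef
    have hG1 : ∀ y ∈ Set.Ioi (0:ℝ), deriv U y * Real.exp (v * y) = c := by
      apply constOn_Ioi (contU'.mul (hexpc v))
      intro y hy
      have h1 := (hdiff2 y hy.ne').mul (hexpd v y)
      rw [hU''r y hy] at h1
      exact h1.congr_deriv (by ring)
    have hU' : ∀ y ∈ Set.Ioi (0:ℝ), deriv U y = c * Real.exp ((-v) * y) := by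
      intro y hy
      have h1 := hG1 y hy
      have h2 : Real.exp (v * y) ≠ 0 := (Real.exp_pos _).ne'
      rw [neg_mul, Real.exp_neg]
      rw [eq_mul_inv_iff_mul_eq₀ h2]
      exact h1
    have hPsi : ∀ y ∈ Set.Ioi (0:ℝ), U y + (c / v) * Real.exp ((-v) * y)
        = U 1 + (c / v) * Real.exp ((-v) * 1) := by
      apply constOn_Ioi (contU.add (continuous_const.mul (hexpc (-v))))
      intro y hy
      have h1 := (hdiff y).add ((hexpd (-v) y).const_mul (c / v))
      rw [hU' y hy] at h1
      have hv' : v ≠ 0 := hv0.ne'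
      exact h1.congr_deriv (by field_simp; ring)
    set d := U 1 + (c / v) * Real.exp ((-v) * 1) with hddef
    have hUy : ∀ y ∈ Set.Ioi (0:ℝ), U y = d - (c / v) * Real.exp ((-v) * y) := by
      intro y hy; have := hPsi y hy; linarith
    have hexp_top : Tendsto (fun y : ℝ => Real.exp ((-v) * y)) atTop (𝓝 0) := by
      apply Real.tendsto_exp_atBot.comp
      exact (tendsto_const_mul_atBot_of_neg (by linarith : -v < 0)).mpr tendsto_id
    have hf0 : Tendsto (fun y : ℝ => d - (c / v) * Real.exp ((-v) * y)) atTop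
        (𝓝 (d - (c / v) * 0)) := tendsto_const_nhds.sub (tendsto_const_nhds.mul hexp_top)
    have hev : U =ᶠ[atTop] fun y : ℝ => d - (c / v) * Real.exp ((-v) * y) := by
      filter_upwards [eventually_gt_atTop (0:ℝ)] with y hy
      exact hUy y hy
    have hd0 : d - (c / v) * 0 = 0 := tendsto_nhds_unique hf0 (htop.congr' hev)
    have hd0' : d = 0 := by linear_combination hd0
    have hU0r : Tendsto U (𝓝[>] (0:ℝ)) (𝓝 (U 0)) :=
      (contU.tendsto 0).mono_left nhdsWithin_le_nhds
    have hlim2 : Tendsto (fun y : ℝ => d - (c / v) * Real.exp ((-v) * y)) (𝓝[>] (0:ℝ))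
        (𝓝 (d - (c / v) * Real.exp ((-v) * 0))) :=
      ((tendsto_const_nhds.sub (tendsto_const_nhds.mul ((hexpc (-v)).tendsto 0))) :
        Tendsto _ (𝓝 (0:ℝ)) _).mono_left nhdsWithin_le_nhds
    have hevr : U =ᶠ[𝓝[>] (0:ℝ)] fun y : ℝ => d - (c / v) * Real.exp ((-v) * y) := by
      filter_upwards [self_mem_nhdsWithin] with y hy
      exact hUy y hy
    have hU0eq : U 0 = d - (c / v) * Real.exp ((-v) * 0) :=
      tendsto_nhds_unique (hU0r.congr' hevr) hlim2
    have hdU0r : Tendsto (deriv U) (𝓝[>] (0:ℝ)) (𝓝 (deriv U 0)) :=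
      (contU'.tendsto 0).mono_left nhdsWithin_le_nhds
    have hlim3 : Tendsto (fun y : ℝ => c * Real.exp ((-v) * y)) (𝓝[>] (0:ℝ))
        (𝓝 (c * Real.exp ((-v) * 0))) :=
      ((tendsto_const_nhds.mul ((hexpc (-v)).tendsto 0)) : Tendsto _ (𝓝 (0:ℝ)) _).mono_left
        nhdsWithin_le_nhds
    have hevr2 : deriv U =ᶠ[𝓝[>] (0:ℝ)] fun y : ℝ => c * Real.exp ((-v) * y) := by
      filter_upwards [self_mem_nhdsWithin] with y hy
      exact hU' y hy
    have hdU0eq : deriv U 0 = c * Real.exp ((-v) * 0) :=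
      tendsto_nhds_unique (hdU0r.congr' hevr2) hlim3
    rw [hU0] at hU0eq
    rw [hd0'] at hU0eq
    simp only [mul_zero, Real.exp_zero, mul_one, zero_sub] at hU0eq hdU0eq
    rw [hdU0eq]
    have hv' : v ≠ 0 := hv0.ne'
    field_simp at hU0eq
    linarith
  -- the potential function
  set F : ℝ → ℝ := fun u => ∫ t in uc..u, f t with hFdef
  have hFd : ∀ u : ℝ, HasDerivAt F (f u) u := by
    intro u
    exact intervalIntegral.integral_hasDerivAt_right (hfc.intervalIntegrable _ _)
      (hfc.stronglyMeasurableAtFilter _ _) hfc.continuousAt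
  have Fcont : Continuous F := by
    have : Differentiable ℝ F := fun u => (hFd u).differentiableAt
    exact this.continuous
  have hFuc : F uc = 0 := intervalIntegral.integral_same
  have hFnonneg : ∀ u : ℝ, uc ≤ u → u ≤ 1 → 0 ≤ F u := by
    intro u h1 h2
    apply intervalIntegral.integral_nonneg h1
    intro x hx
    exact hfpos x hx.1 (le_trans hx.2 h2)
  have hFleF1 : ∀ u : ℝ, uc ≤ u → u ≤ 1 → F u ≤ F 1 := by
    intro u h1 h2
    have hsub : F 1 - F u = ∫ t in u..1, f t :=
      intervalIntegral.integral_interval_sub_left (hfc.intervalIntegrable _ _)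
        (hfc.intervalIntegrable _ _)
    have hpos' : 0 ≤ ∫ t in u..1, f t := by
      apply intervalIntegral.integral_nonneg h2
      intro x hx
      exact hfpos x (le_trans h1 hx.1) hx.2
    linarith
  have hF1le : F 1 ≤ G ^ 2 * (1 - uc) ^ 2 / 2 := by
    have hmono : F 1 ≤ ∫ t in uc..1, G ^ 2 * (1 - t) := by
      apply intervalIntegral.integral_mono_on huc1.le (hfc.intervalIntegrable _ _)
        (((continuous_const.mul (continuous_const.sub continuous_id)) :
          Continuous fun t : ℝ => G ^ 2 * (1 - t)).intervalIntegrable _ _)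
      intro x hx
      exact hhigh x hx.1 hx.2
    have hcomp : (∫ t in uc..1, G ^ 2 * (1 - t)) = G ^ 2 * (1 - uc) ^ 2 / 2 := by
      rw [intervalIntegral.integral_const_mul]
      have h0 : (∫ t in uc..1, (1 - t)) = (∫ t in uc..1, (1:ℝ)) - ∫ t in uc..1, t :=
        intervalIntegral.integral_sub intervalIntegrable_const intervalIntegral.intervalIntegrable_id
      have h1 : (∫ t in uc..1, (1:ℝ)) = 1 - uc := by simp
      rw [h0, h1, integral_id]; ring
    linarith [hmono, hcomp.le]
  -- the energy function
  set E : ℝ → ℝ := fun y => (deriv U y) ^ 2 / 2 + F (U y) with hEdef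
  have contE : Continuous E := ((contU'.pow 2).div_const 2).add (Fcont.comp contU)
  have hE0 : E 0 = (v * uc) ^ 2 / 2 := by
    simp only [hEdef, hdU0, hU0, hFuc]
    ring
  have hEd : ∀ y : ℝ, y < 0 →
      HasDerivAt E (deriv U y * (deriv (deriv U) y + f (U y))) y := by
    intro y hy
    have h1 : HasDerivAt (fun z : ℝ => (deriv U z) ^ 2 / 2)
        (2 * deriv U y ^ 1 * deriv (deriv U) y / 2) y := ((hdiff2 y hy.ne).pow 2).div_const 2
    have h2 : HasDerivAt (fun z : ℝ => F (U z)) (f (U y) * deriv U y) y :=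
      (hFd (U y)).comp y (hdiff y)
    have := h1.add h2
    exact this.congr_deriv (by ring)
  have hlocmin : ∀ y : ℝ, y < 0 → U y = uc → deriv U y = 0 := by
    intro y hy hUyuc
    have hmin : IsLocalMin U y := by
      filter_upwards [Iio_mem_nhds hy] with z hz
      rw [hUyuc]
      exact (hneg z hz).1
    exact hmin.deriv_eq_zero
  have hEante : AntitoneOn E (Set.Iic (0:ℝ)) := by
    apply antitoneOn_of_deriv_nonpos (convex_Iic 0) contE.continuousOn
    · intro y hy
      rw [interior_Iic] at hy
      exact (hEd y hy).differentiableAt.differentiableWithinAt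
    · intro y hy
      rw [interior_Iic] at hy
      rw [(hEd y hy).deriv]
      rcases eq_or_lt_of_le (hneg y hy).1 with hequc | hgtuc
      · rw [hlocmin y hy hequc.symm]; ring_nf; exact le_rfl
      · rw [hU'' y hy.ne, hcutf _ hgtuc]
        have : deriv U y * (-(v * deriv U y) - f (U y) + f (U y)) = -(v * (deriv U y) ^ 2) := by
          ring
        rw [this]
        nlinarith [sq_nonneg (deriv U y), hv0]
  have hflat : ∀ y : ℝ, y ≤ 0 → ∀ δ : ℝ, 0 < δ → ∃ y' : ℝ, y' < 0 ∧ y' ≤ y ∧ |deriv U y'| ≤ δ := by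
    intro y hy δ hδ
    set b := min y (-1) with hb
    set a := b - 2/δ with ha
    have hab : a < b := by
      have h2 : 0 < 2/δ := by positivity
      rw [ha]; linarith
    obtain ⟨c, hc, hceq⟩ := exists_hasDerivAt_eq_slope U (deriv U) hab
      contU.continuousOn (fun x _ => hdiff x)
    have hble : b ≤ -1 := min_le_right _ _
    have hbley : b ≤ y := min_le_left _ _
    have hbneg : b < 0 := lt_of_le_of_lt hble (by norm_num)
    have haneg : a < 0 := lt_trans hab hbneg
    refine ⟨c, by linarith [hc.2], by linarith [hc.2], ?_⟩
    rw [hceq]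
    have hUb := hneg b hbneg
    have hUa := hneg a haneg
    have h1 : |U b - U a| ≤ 1 := by
      rw [abs_le]
      constructor
      · linarith [hUb.1, hUa.2, huc0.le]
      · linarith [hUb.2, hUa.1, huc0.le]
    have hba : b - a = 2/δ := by rw [ha]; ring
    rw [abs_div, hba, abs_of_pos (by positivity : (0:ℝ) < 2/δ)]
    rw [div_le_iff₀ (by positivity : (0:ℝ) < 2/δ)]
    have h2 : δ * (2/δ) = 2 := by field_simp
    linarith
  have hEleF1 : ∀ y : ℝ, y ≤ 0 → E y ≤ F 1 := by
    intro y hy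
    by_contra hcon
    push_neg at hcon
    obtain ⟨δ, hδ, h4, h5⟩ : ∃ δ : ℝ, 0 < δ ∧ δ ≤ 1 ∧ δ ≤ E y - F 1 :=
      ⟨min 1 (E y - F 1), lt_min one_pos (by linarith), min_le_left _ _, min_le_right _ _⟩
    obtain ⟨y', hy'0, hy'le, habs⟩ := hflat y hy δ hδ
    have h1 : E y ≤ E y' := hEante (mem_Iic.mpr hy'0.le) (mem_Iic.mpr hy) hy'le
    have h2 : (deriv U y') ^ 2 ≤ δ ^ 2 := by
      have h3 := pow_le_pow_left₀ (abs_nonneg (deriv U y')) habs 2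
      rwa [sq_abs] at h3
    have h3 : F (U y') ≤ F 1 := hFleF1 _ (hneg y' hy'0).1 (hneg y' hy'0).2
    have h6 : E y' = (deriv U y') ^ 2 / 2 + F (U y') := rfl
    have h7 : δ ^ 2 ≤ δ := by nlinarith
    clear_value E F
    linarith
  -- upper bound
  have hub : v * uc ≤ G * (1 - uc) := by
    have h1 : (v * uc) ^ 2 / 2 ≤ G ^ 2 * (1 - uc) ^ 2 / 2 := by
      rw [← hE0]
      exact le_trans (hEleF1 0 le_rfl) hF1le
    have h2 : (v * uc) ^ 2 ≤ (G * (1 - uc)) ^ 2 := by nlinarith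
    have h3 : 0 ≤ v * uc := mul_nonneg hv huc0.le
    have h4 : 0 ≤ G * (1 - uc) := mul_nonneg hG.le (by linarith)
    nlinarith
  refine ⟨?_, hub⟩
  have hEexp : ∀ y : ℝ, E y = (deriv U y) ^ 2 / 2 + F (U y) := fun _ => rfl
  clear_value E F
  -- the solution stays strictly above the cutoff on the left
  have hUgt : ∀ y : ℝ, y < 0 → uc < U y := by
    intro y hy
    rcases eq_or_lt_of_le (hneg y hy).1 with heq | h
    · exfalso
      have hd0 := hlocmin y hy heq.symm
      have hEy : E y = 0 := by
        rw [hEexp y, hd0, ← heq, hFuc]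
        norm_num
      have hmono := hEante (mem_Iic.mpr hy.le) (mem_Iic.mpr le_rfl) hy.le
      rw [hE0, hEy] at hmono
      linarith [pow_pos (mul_pos hv0 huc0) 2]
    · exact h
  have hU'bd : ∀ y : ℝ, y ≤ 0 → (deriv U y) ^ 2 ≤ 2 * F 1 := by
    intro y hy
    have h1 := hEleF1 y hy
    have h2 : 0 ≤ F (U y) := by
      rcases eq_or_lt_of_le hy with heq | hlt
      · rw [heq, hU0, hFuc]
      · exact hFnonneg _ (hneg y hlt).1 (hneg y hlt).2
    have h3 := hEexp y
    linarith
  -- roots of the characteristic polynomial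
  obtain ⟨sq, hsq0, hsq2⟩ : ∃ sq : ℝ, 0 ≤ sq ∧ sq ^ 2 = v ^ 2 + 4 * γ ^ 2 :=
    ⟨Real.sqrt (v ^ 2 + 4 * γ ^ 2), Real.sqrt_nonneg _, Real.sq_sqrt (by positivity)⟩
  have hsge : 2 * γ ≤ sq := sqrt_ge_two_gamma hsq0 hsq2 hγ.le
  have hsv : v ≤ sq := sqrt_ge_v hsq0 hsq2 hv
  obtain ⟨lp, hlpdef⟩ : ∃ lp : ℝ, lp = (sq - v) / 2 := ⟨_, rfl⟩
  obtain ⟨lm, hlmdef⟩ : ∃ lm : ℝ, lm = -((sq + v) / 2) := ⟨_, rfl⟩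
  have hlp0 : 0 ≤ lp := by rw [hlpdef]; linarith
  have hlm0 : lm < 0 := by rw [hlmdef]; nlinarith [hγ]
  have hsum : lp + lm = -v := by rw [hlpdef, hlmdef]; ring
  have hprod : lp * lm = -γ ^ 2 := by
    rw [hlpdef, hlmdef]
    linear_combination (-(1:ℝ) / 4) * hsq2
  -- the comparison function
  set h₂ : ℝ → ℝ := fun y => -(deriv U y) - lp * (1 - U y) with hh2def
  have conth2 : Continuous h₂ :=
    (contU'.neg).sub (continuous_const.mul (continuous_const.sub contU))
  have hh2d : ∀ y : ℝ, y < 0 →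
      HasDerivAt h₂ (-(deriv (deriv U) y) + lp * deriv U y) y := by
    intro y hy
    have h1 : HasDerivAt (fun z : ℝ => 1 - U z) (-(deriv U y)) y := (hdiff y).const_sub 1
    have h2 := ((hdiff2 y hy.ne).neg).sub (h1.const_mul lp)
    exact h2.congr_deriv (by ring)
  have hkeyineq : ∀ y : ℝ, y < 0 → lm * h₂ y ≤ -(deriv (deriv U) y) + lp * deriv U y := by
    intro y hy
    have hode : deriv (deriv U) y = -(v * deriv U y) - f (U y) := by
      rw [hU'' y hy.ne, hcutf _ (hUgt y hy)]
    have hlowy := hlow (U y) (hneg y hy).1 (hneg y hy).2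
    have hexpand : -(deriv (deriv U) y) + lp * deriv U y - lm * h₂ y
        = f (U y) - γ ^ 2 * (1 - U y) := by
      rw [hode]
      show -(-(v * deriv U y) - f (U y)) + lp * deriv U y
          - lm * (-(deriv U y) - lp * (1 - U y)) = f (U y) - γ ^ 2 * (1 - U y)
      linear_combination (deriv U y) * hsum + (1 - U y) * hprod
    linarith
  set g : ℝ → ℝ := fun y => Real.exp ((-lm) * y) * h₂ y with hgdef
  have hgd : ∀ y : ℝ, y < 0 → HasDerivAt g
      (Real.exp ((-lm) * y) * ((-(deriv (deriv U) y) + lp * deriv U y) - lm * h₂ y)) y := by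
    intro y hy
    have h1 := (hexpd (-lm) y).mul (hh2d y hy)
    refine h1.congr_deriv ?_
    symm
    show Real.exp ((-lm) * y) * ((-(deriv (deriv U) y) + lp * deriv U y)
        - lm * (-(deriv U y) - lp * (1 - U y)))
      = Real.exp ((-lm) * y) * (-lm) * (-(deriv U y) - lp * (1 - U y))
        + Real.exp ((-lm) * y) * (-(deriv (deriv U) y) + lp * deriv U y)
    ring
  have hgmono : MonotoneOn g (Set.Iic (0:ℝ)) := by
    apply monotoneOn_of_deriv_nonneg (f := g) (convex_Iic 0) ((hexpc (-lm)).mul conth2).continuousOn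
    · intro y hy; rw [interior_Iic] at hy
      exact (hgd y hy).differentiableAt.differentiableWithinAt
    · intro y hy; rw [interior_Iic] at hy
      rw [(hgd y hy).deriv]
      have hki := hkeyineq y hy
      exact mul_nonneg (Real.exp_pos ((-lm) * y)).le (by linarith)
  obtain ⟨M, hMbd⟩ : ∃ M : ℝ, ∀ y : ℝ, y ≤ 0 → |h₂ y| ≤ M := by
    refine ⟨Real.sqrt (2 * F 1) + lp * (1 - uc), ?_⟩
    intro y hy
    have h1 : |deriv U y| ≤ Real.sqrt (2 * F 1) := by
      have h2 : |deriv U y| = Real.sqrt ((deriv U y) ^ 2) := (Real.sqrt_sq_eq_abs _).symm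
      rw [h2]
      exact Real.sqrt_le_sqrt (hU'bd y hy)
    have hUy : uc ≤ U y ∧ U y ≤ 1 := by
      rcases eq_or_lt_of_le hy with heq | hlt
      · rw [heq, hU0]; exact ⟨le_rfl, huc1.le⟩
      · exact hneg y hlt
    have h3 : |lp * (1 - U y)| ≤ lp * (1 - uc) := by
      rw [abs_mul, abs_of_nonneg hlp0, abs_of_nonneg (by linarith [hUy.2])]
      nlinarith [hUy.1]
    have h4 : |h₂ y| ≤ |deriv U y| + |lp * (1 - U y)| := by
      show |-(deriv U y) - lp * (1 - U y)| ≤ _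
      calc |-(deriv U y) - lp * (1 - U y)| = |(-(deriv U y)) + (-(lp * (1 - U y)))| := by
            ring_nf
        _ ≤ |(-(deriv U y))| + |(-(lp * (1 - U y)))| := abs_add_le _ _
        _ = |deriv U y| + |lp * (1 - U y)| := by rw [abs_neg, abs_neg]
    linarith
  have hgtend : Tendsto g atBot (𝓝 0) := by
    apply squeeze_zero_norm' (a := fun y : ℝ => Real.exp ((-lm) * y) * M)
    · filter_upwards [eventually_le_atBot (0:ℝ)] with y hy
      have h1 : ‖g y‖ = Real.exp ((-lm) * y) * |h₂ y| := by
        show |Real.exp ((-lm) * y) * h₂ y| = _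
        rw [abs_mul, abs_of_pos (Real.exp_pos _)]
      rw [h1]
      exact mul_le_mul_of_nonneg_left (hMbd y hy) (Real.exp_pos _).le
    · have h2 : Tendsto (fun y : ℝ => Real.exp ((-lm) * y)) atBot (𝓝 0) := by
        apply Real.tendsto_exp_atBot.comp
        exact (tendsto_const_mul_atBot_of_pos (by linarith : (0:ℝ) < -lm)).mpr tendsto_id
      have := h2.mul_const M
      simpa using this
  have hg00 : 0 ≤ g 0 := by
    apply le_of_tendsto hgtend
    filter_upwards [eventually_le_atBot (0:ℝ)] with y hy
    exact hgmono (mem_Iic.mpr hy) (mem_Iic.mpr le_rfl) hy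
  have hg0 : g 0 = h₂ 0 := by
    show Real.exp ((-lm) * 0) * h₂ 0 = h₂ 0
    rw [mul_zero, Real.exp_zero, one_mul]
  have hfinal : lp * (1 - uc) ≤ v * uc := by
    rw [hg0] at hg00
    have : h₂ 0 = -(deriv U 0) - lp * (1 - U 0) := rfl
    rw [this, hdU0, hU0] at hg00
    linarith
  have hlpγ : γ - v / 2 ≤ lp := by rw [hlpdef]; linarith
  exact final_lower_bound hfinal hlpγ huc1.le hv

lemma sqrt_one_sub_ge {x : ℝ} (h0 : 0 ≤ x) (h1 : x ≤ 1) : 1 - x ≤ Real.sqrt (1 - x) := by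
  have h := Real.sq_sqrt (by linarith : (0:ℝ) ≤ 1 - x)
  have hs := Real.sqrt_nonneg (1 - x)
  nlinarith [sq_nonneg (Real.sqrt (1 - x) - 1)]

lemma sqrt_one_add_le {x : ℝ} (h0 : 0 ≤ x) : Real.sqrt (1 + x) ≤ 1 + x := by
  have h := Real.sq_sqrt (by linarith : (0:ℝ) ≤ 1 + x)
  have hs := Real.sqrt_nonneg (1 + x)
  nlinarith [sq_nonneg (Real.sqrt (1 + x) - 1)]

/-- As the cut-off tends to `1⁻`, the speed is asymptotic to `|f'(1)|^(1/2) (1 - u_c)`. -/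
theorem vstar_asymp_one (f : ℝ → ℝ) (hf : IsKPP f) (vstar : ℝ → ℝ)
    (hvstar : ∀ uc ∈ Set.Ioo (0:ℝ) 1, 0 ≤ vstar uc ∧ ∃ U : ℝ → ℝ, IsPTW f uc (vstar uc) U) :
    Tendsto (fun uc => vstar uc / ((1 - uc) * Real.sqrt |deriv f 1|))
      (𝓝[<] (1:ℝ)) (𝓝 1) := by
  obtain ⟨hC1f, hf00, hf10, hdf0, hdf1, hmid, hgt⟩ := hf
  set μ := |deriv f 1| with hμdef
  have hμ : μ = -(deriv f 1) := abs_of_neg hdf1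
  have hμpos : 0 < μ := abs_pos.mpr hdf1.ne
  have contf : Continuous f := hC1f.continuous
  have contf' : Continuous (deriv f) := hC1f.continuous_deriv le_rfl
  have hbound : ∀ ε' : ℝ, 0 < ε' → ∃ δ : ℝ, 0 < δ ∧ ∀ u : ℝ, 1 - δ < u → u ≤ 1 →
      (μ - ε') * (1 - u) ≤ f u ∧ f u ≤ (μ + ε') * (1 - u) := by
    intro ε' hε'
    have hcont1 : ContinuousAt (deriv f) 1 := contf'.continuousAt
    rw [Metric.continuousAt_iff] at hcont1
    obtain ⟨δ0, hδ0, hδball⟩ := hcont1 ε' hε'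
    refine ⟨δ0, hδ0, ?_⟩
    intro u hu1 hu2
    have hder_bd : ∀ t : ℝ, u ≤ t → t ≤ 1 →
        -(μ + ε') ≤ deriv f t ∧ deriv f t ≤ -(μ - ε') := by
      intro t ht1 ht2
      have hd : dist t 1 < δ0 := by
        rw [Real.dist_eq, abs_lt]; constructor <;> linarith
      have h2 := hδball hd
      rw [Real.dist_eq, abs_lt] at h2
      constructor <;> [linarith; linarith]
    have hftc : ∫ t in u..1, deriv f t = f 1 - f u :=
      intervalIntegral.integral_deriv_eq_sub (fun x _ => hC1f.differentiable one_ne_zero x)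
        (contf'.intervalIntegrable _ _)
    have hle1 : (∫ t in u..1, deriv f t) ≤ ∫ t in u..1, (-(μ - ε')) :=
      intervalIntegral.integral_mono_on hu2 (contf'.intervalIntegrable _ _)
        intervalIntegrable_const (fun t ht => (hder_bd t ht.1 ht.2).2)
    have hge1 : (∫ t in u..1, (-(μ + ε'))) ≤ ∫ t in u..1, deriv f t :=
      intervalIntegral.integral_mono_on hu2 intervalIntegrable_const
        (contf'.intervalIntegrable _ _) (fun t ht => (hder_bd t ht.1 ht.2).1)
    rw [intervalIntegral.integral_const, smul_eq_mul] at hle1 hge1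
    rw [hftc, hf10] at hle1 hge1
    constructor
    · have hr : (1 - u) * (-(μ - ε')) = -((μ - ε') * (1 - u)) := by ring
      rw [hr] at hle1
      linarith
    · have hr : (1 - u) * (-(μ + ε')) = -((μ + ε') * (1 - u)) := by ring
      rw [hr] at hge1
      linarith
  rw [Metric.tendsto_nhdsWithin_nhds]
  intro ε hε
  obtain ⟨x, hx0, hx12, hxε⟩ : ∃ x : ℝ, 0 < x ∧ x ≤ 1/2 ∧ x ≤ ε/4 :=
    ⟨min (1/2) (ε/4), by positivity, min_le_left _ _, min_le_right _ _⟩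
  obtain ⟨δ, hδ0, hδbd⟩ := hbound (μ * x) (by positivity)
  refine ⟨min δ (x/2), by positivity, ?_⟩
  intro uc hucmem hdist
  have huc1 : uc < 1 := hucmem
  rw [Real.dist_eq, abs_lt] at hdist
  have hmin1 : min δ (x/2) ≤ δ := min_le_left _ _
  have hmin2 : min δ (x/2) ≤ x/2 := min_le_right _ _
  have hucδ : 1 - δ < uc := by linarith [hdist.1]
  have hucx : 1 - x/2 < uc := by linarith [hdist.1]
  have huc34 : (3:ℝ)/4 ≤ uc := by linarith
  have huc0 : 0 < uc := by linarith
  obtain ⟨hvge, U, hU⟩ := hvstar uc ⟨huc0, huc1⟩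
  have hμx1 : 0 < μ - μ * x := by nlinarith
  have hμx2 : 0 < μ + μ * x := by positivity
  have hγpos : 0 < Real.sqrt (μ - μ * x) := Real.sqrt_pos.mpr hμx1
  have hGpos : 0 < Real.sqrt (μ + μ * x) := Real.sqrt_pos.mpr hμx2
  have hγ2 : Real.sqrt (μ - μ * x) ^ 2 = μ - μ * x := Real.sq_sqrt hμx1.le
  have hG2 : Real.sqrt (μ + μ * x) ^ 2 = μ + μ * x := Real.sq_sqrt hμx2.le
  have hlow : ∀ u, uc ≤ u → u ≤ 1 → Real.sqrt (μ - μ * x) ^ 2 * (1 - u) ≤ f u := by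
    intro u h1 h2
    rw [hγ2]
    exact (hδbd u (by linarith) h2).1
  have hhigh : ∀ u, uc ≤ u → u ≤ 1 → f u ≤ Real.sqrt (μ + μ * x) ^ 2 * (1 - u) := by
    intro u h1 h2
    rw [hG2]
    exact (hδbd u (by linarith) h2).2
  obtain ⟨hlb, hub⟩ := ptw_speed_bounds f contf huc0 huc1 hγpos hGpos hvge hlow hhigh hU
  have hsqrtμ : 0 < Real.sqrt μ := Real.sqrt_pos.mpr hμpos
  have h1uc : 0 < 1 - uc := by linarith
  have hγeq : Real.sqrt (μ - μ * x) = Real.sqrt μ * Real.sqrt (1 - x) := by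
    rw [← Real.sqrt_mul hμpos.le]; congr 1; ring
  have hGeq : Real.sqrt (μ + μ * x) = Real.sqrt μ * Real.sqrt (1 + x) := by
    rw [← Real.sqrt_mul hμpos.le]; congr 1; ring
  have hsx_low : 1 - x ≤ Real.sqrt (1 - x) := sqrt_one_sub_ge hx0.le (by linarith)
  have hsx_high : Real.sqrt (1 + x) ≤ 1 + x := sqrt_one_add_le hx0.le
  set T := vstar uc / ((1 - uc) * Real.sqrt μ) with hTdef
  have hTlow : 1 - x ≤ T := by
    rw [hTdef, le_div_iff₀ (by positivity)]
    calc (1 - x) * ((1 - uc) * Real.sqrt μ)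
        ≤ Real.sqrt (1 - x) * ((1 - uc) * Real.sqrt μ) :=
          mul_le_mul_of_nonneg_right hsx_low (by positivity)
      _ = Real.sqrt (μ - μ * x) * (1 - uc) := by rw [hγeq]; ring
      _ ≤ vstar uc := hlb
  have hThigh : T ≤ (1 + x) / uc := by
    rw [hTdef, div_le_div_iff₀ (by positivity) huc0]
    calc vstar uc * uc ≤ Real.sqrt (μ + μ * x) * (1 - uc) := hub
      _ = (Real.sqrt μ * Real.sqrt (1 + x)) * (1 - uc) := by rw [hGeq]
      _ ≤ (Real.sqrt μ * (1 + x)) * (1 - uc) := by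
          apply mul_le_mul_of_nonneg_right _ h1uc.le
          exact mul_le_mul_of_nonneg_left hsx_high hsqrtμ.le
      _ = (1 + x) * ((1 - uc) * Real.sqrt μ) := by ring
  have hhx : (1 + x) / uc ≤ 1 + 2 * x := by
    rw [div_le_iff₀ huc0]
    nlinarith
  rw [Real.dist_eq, abs_lt]
  constructor
  · have : (1:ℝ) - ε < 1 - x := by linarith
    linarith
  · linarith
end

section
/- Let u_c be in (0,1), let f be a KPP reaction function, and let U be a permanent form travelling wave solution with cut-off u_c and speed v > 0. Then U(y) = u_c e^{−v y} for all y ≥ 0. -/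
open Real Filter Topology

lemma const_on_pos (g : ℝ → ℝ) (hg : ∀ x : ℝ, 0 < x → HasDerivAt g 0 x) :
    ∀ x : ℝ, 0 < x → ∀ z : ℝ, 0 < z → g x = g z := by
  have key : ∀ a b : ℝ, 0 < a → a ≤ b → g b = g a := by
    intro a b ha hab
    have hcont : ContinuousOn g (Set.Icc a b) := fun x hx =>
      ((hg x (lt_of_lt_of_le ha hx.1)).continuousAt).continuousWithinAt
    have hderiv : ∀ x ∈ Set.Ico a b, HasDerivWithinAt g 0 (Set.Ici x) x := fun x hx =>
      (hg x (lt_of_lt_of_le ha hx.1)).hasDerivWithinAt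
    exact constant_of_has_deriv_right_zero hcont hderiv b ⟨hab, le_rfl⟩
  intro x hx z hz
  rcases le_total x z with h | h
  · exact (key x z hx h).symm
  · exact key z x hz h

/-- Ahead of the wave front, the PTW profile is the exponential `u_c * exp (-v y)`. -/
theorem ptw_exponential_tail (f : ℝ → ℝ) (hf : IsKPP f) (uc : ℝ) (huc : uc ∈ Set.Ioo (0:ℝ) 1)
    (v : ℝ) (hv : 0 < v) (U : ℝ → ℝ) (hU : IsPTW f uc v U) :
    ∀ y : ℝ, 0 ≤ y → U y = uc * Real.exp (-v * y) := by
  obtain ⟨hUc, hU2, hODE, hU0, hneg, hpos, hbot, htop⟩ := hU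

  -- Step A: second-order info
  have hA : ∀ y : ℝ, 0 < y → HasDerivAt (deriv U) (-(v * deriv U y)) y := by
    intro y hy
    obtain ⟨s, hs_nhds, hs⟩ := (hU2 y hy.ne').contDiffOn (le_refl 2) (by simp)
    have hyint : y ∈ interior s := mem_interior_iff_mem_nhds.2 hs_nhds
    have hs' : ContDiffOn ℝ 2 U (interior s) := hs.mono interior_subset
    have hd1 : ContDiffOn ℝ 1 (deriv U) (interior s) :=
      hs'.deriv_of_isOpen isOpen_interior (by norm_num)
    have hdiff : DifferentiableAt ℝ (deriv U) y :=
      ((hd1.differentiableOn one_ne_zero).differentiableAt (isOpen_interior.mem_nhds hyint))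
    have hval : deriv (deriv U) y = -(v * deriv U y) := by
      have h0 := hODE y hy.ne'
      have hcut : cutoff f uc (U y) = 0 := by
        simp [cutoff, not_lt.2 (hpos y hy).2]
      rw [hcut] at h0; linarith
    simpa [hval] using hdiff.hasDerivAt
  -- Step B: W = deriv U * exp(v y) has zero derivative
  set W : ℝ → ℝ := fun y => deriv U y * Real.exp (v * y) with hW
  have hB : ∀ y : ℝ, 0 < y → HasDerivAt W 0 y := by
    intro y hy
    have he : HasDerivAt (fun y : ℝ => Real.exp (v * y)) (Real.exp (v * y) * v) y := by
      simpa using ((hasDerivAt_id y).const_mul v).exp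
    have := (hA y hy).mul he
    have h2 : -(v * deriv U y) * Real.exp (v * y) + deriv U y * (Real.exp (v * y) * v) = 0 := by ring
    rw [h2] at this
    exact this
  set c : ℝ := W 1 with hc
  have hC : ∀ y : ℝ, 0 < y → deriv U y = c * Real.exp (-(v * y)) := by
    intro y hy
    have := const_on_pos W hB y hy 1 one_pos
    have hWy : deriv U y * Real.exp (v * y) = c := this
    have hexp : Real.exp (v * y) ≠ 0 := Real.exp_ne_zero _
    rw [← hWy, mul_assoc, ← Real.exp_add]
    simp
  -- Step D: φ = U + (c/v) exp(-v y) constant on (0,∞)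
  set φ : ℝ → ℝ := fun y => U y + (c / v) * Real.exp (-(v * y)) with hφ
  have hD : ∀ y : ℝ, 0 < y → HasDerivAt φ 0 y := by
    intro y hy
    have hU' : HasDerivAt U (deriv U y) y :=
      ((hUc.differentiable one_ne_zero) y).hasDerivAt
    have he : HasDerivAt (fun y : ℝ => Real.exp (-(v * y))) (Real.exp (-(v * y)) * -v) y := by
      have : HasDerivAt (fun y : ℝ => -(v * y)) (-v) y := by
        exact (((hasDerivAt_id y).const_mul v).neg).congr_deriv (by simp)
      exact this.exp
    have := hU'.add (he.const_mul (c / v))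
    have h0 : deriv U y + c / v * (Real.exp (-(v * y)) * -v) = 0 := by
      rw [hC y hy]; field_simp; ring
    rw [h0] at this
    exact this
  -- Step E: constant value is 0 via limit at infinity
  have hK : ∀ y : ℝ, 0 < y → φ y = φ 1 := fun y hy => const_on_pos φ hD y hy 1 one_pos
  have hexp0 : Tendsto (fun y : ℝ => Real.exp (-(v * y))) atTop (𝓝 0) := by
    exact Real.tendsto_exp_neg_atTop_nhds_zero.comp (tendsto_id.const_mul_atTop hv)
  have hφtop : Tendsto φ atTop (𝓝 0) := by
    have := htop.add (hexp0.const_mul (c / v))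
    simpa using this
  have hφconst : Tendsto φ atTop (𝓝 (φ 1)) := by
    refine tendsto_const_nhds.congr' ?_
    filter_upwards [eventually_gt_atTop (0:ℝ)] with y hy using (hK y hy).symm
  have hφ1 : φ 1 = 0 := tendsto_nhds_unique hφconst hφtop
  have hUy : ∀ y : ℝ, 0 < y → U y = -(c / v) * Real.exp (-(v * y)) := by
    intro y hy
    have := (hK y hy).trans hφ1
    simp only [hφ] at this
    linarith
  -- Step F: continuity at 0 gives uc = -(c/v)
  have hlim1 : Tendsto U (𝓝[>] (0:ℝ)) (𝓝 uc) := by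
    have h := (hUc.continuous.tendsto 0).mono_left
      (nhdsWithin_le_nhds : 𝓝[>] (0:ℝ) ≤ 𝓝 0)
    rwa [hU0] at h
  have hlim2 : Tendsto U (𝓝[>] (0:ℝ)) (𝓝 (-(c / v))) := by
    have hcont0 : Continuous (fun y : ℝ => -(c / v) * Real.exp (-(v * y))) := by
      fun_prop
    have hcont : Tendsto (fun y : ℝ => -(c / v) * Real.exp (-(v * y))) (𝓝[>] (0:ℝ))
        (𝓝 (-(c / v) * Real.exp (-(v * 0)))) :=
      hcont0.continuousAt.tendsto.mono_left nhdsWithin_le_nhds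
    have : Tendsto (fun y : ℝ => -(c / v) * Real.exp (-(v * y))) (𝓝[>] (0:ℝ)) (𝓝 (-(c / v))) := by
      simpa using hcont
    refine this.congr' ?_
    filter_upwards [self_mem_nhdsWithin] with y hy using (hUy y hy).symm
  have huceq : uc = -(c / v) := tendsto_nhds_unique hlim1 hlim2
  intro y hy
  rcases eq_or_lt_of_le hy with h | h
  · simp [← h, hU0]
  · rw [hUy y h, ← huceq]; ring_nf
end

section
/- Let u_c be in (0,1), let f be a KPP reaction function, and let U be a permanent form travelling wave solution with cut-off u_c and speed v > 0. Then U is strictly monotone decreasing on ℝ; in fact U'(y) < 0 for all y in ℝ, and 0 < U(y) < 1 for all y in ℝ. -/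
open Real Filter Topology

/-- A continuous function with vanishing derivative on `(0,∞)` is constant on `[0,∞)`. -/
lemma ptw_aux_const_on_Ici {φ : ℝ → ℝ} (hc : Continuous φ)
    (hd : ∀ y : ℝ, 0 < y → HasDerivAt φ 0 y) : ∀ y : ℝ, 0 ≤ y → φ y = φ 0 := by
  intro y hy
  rcases eq_or_lt_of_le hy with h | h
  · rw [← h]
  have key : ∀ a ∈ Set.Ioc (0:ℝ) y, φ y = φ a := by
    intro a ha
    exact (constant_of_has_deriv_right_zero (f := φ) (a := a) (b := y)
      hc.continuousOn (fun x hx => (hd x (lt_of_lt_of_le ha.1 hx.1)).hasDerivWithinAt))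
      y ⟨ha.2, le_rfl⟩
  have h1 : Tendsto φ (𝓝[>] (0:ℝ)) (𝓝 (φ 0)) := hc.continuousAt.continuousWithinAt
  have h2 : Tendsto φ (𝓝[>] (0:ℝ)) (𝓝 (φ y)) := by
    refine Tendsto.congr' ?_ tendsto_const_nhds
    filter_upwards [Ioc_mem_nhdsGT h] with a ha
    exact key a ha
  exact tendsto_nhds_unique h2 h1

set_option maxHeartbeats 2000000 in
/-- The PTW profile is strictly decreasing, with negative derivative, and `0 < U < 1`. -/
theorem ptw_strict_decreasing (f : ℝ → ℝ) (hf : IsKPP f) (uc : ℝ) (huc : uc ∈ Set.Ioo (0:ℝ) 1)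
    (v : ℝ) (hv : 0 < v) (U : ℝ → ℝ) (hU : IsPTW f uc v U) :
    StrictAnti U ∧ (∀ y : ℝ, deriv U y < 0) ∧ (∀ y : ℝ, 0 < U y ∧ U y < 1) := by
  obtain ⟨huc0, huc1⟩ := huc
  obtain ⟨hfC1, hf0, hf1, -, -, hfpos, -⟩ := hf
  obtain ⟨hC1, hC2, hODE, hU0, hneg, hpos, hbot, htop⟩ := hU
  have hUc : Continuous U := hC1.continuous
  have hU'c : Continuous (deriv U) := hC1.continuous_deriv le_rfl
  have hUd : ∀ y : ℝ, HasDerivAt U (deriv U y) y :=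
    fun y => (hC1.differentiable one_ne_zero y).hasDerivAt
  have hD2 : ∀ y : ℝ, y ≠ 0 → HasDerivAt (deriv U) (deriv (deriv U) y) y := by
    intro y hy
    obtain ⟨u, hu, hcd⟩ := (hC2 y hy).contDiffOn le_rfl (by simp)
    obtain ⟨t, htu, hto, hyt⟩ := mem_nhds_iff.1 hu
    have h1 : ContDiffOn ℝ 1 (deriv U) t := (hcd.mono htu).deriv_of_isOpen hto (by norm_num)
    exact (((h1.differentiableOn one_ne_zero) y hyt).differentiableAt (hto.mem_nhds hyt)).hasDerivAt
  -- derivative of exp (v * y)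
  have hexp : ∀ y : ℝ, HasDerivAt (fun z : ℝ => Real.exp (v * z)) (v * Real.exp (v * y)) y := by
    intro y
    have h := ((hasDerivAt_id y).const_mul v).exp
    simpa [mul_comm] using h
  -- the function g z = exp (v z) * U' z
  set gf : ℝ → ℝ := fun z => Real.exp (v * z) * deriv U z with hgf_def
  have hgc : Continuous gf :=
    (Real.continuous_exp.comp (continuous_const.mul continuous_id)).mul hU'c
  have hgd : ∀ y : ℝ, y ≠ 0 →
      HasDerivAt gf (-(Real.exp (v * y) * cutoff f uc (U y))) y := by
    intro y hy
    have h := (hexp y).mul (hD2 y hy)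
    have hode := hODE y hy
    refine h.congr_deriv ?_
    have h2 : deriv (deriv U) y = -(v * deriv U y) - cutoff f uc (U y) := by linarith
    rw [h2]; ring
  ------------------------------------------------------------------
  -- PART 1 : behaviour on [0, ∞)
  ------------------------------------------------------------------
  have hcut0 : ∀ y : ℝ, 0 < y → cutoff f uc (U y) = 0 := fun y hy =>
    if_neg (not_lt.2 (hpos y hy).2)
  have hgconst : ∀ y : ℝ, 0 ≤ y → gf y = gf 0 :=
    ptw_aux_const_on_Ici hgc (fun y hy => by
      simpa [hcut0 y hy] using hgd y (ne_of_gt hy))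
  have hgf0 : gf 0 = deriv U 0 := by simp [hgf_def]
  have hU'formula : ∀ y : ℝ, 0 ≤ y → deriv U y = deriv U 0 * Real.exp (-(v * y)) := by
    intro y hy
    have h := (hgconst y hy).trans hgf0
    simp only [hgf_def] at h
    rw [Real.exp_neg]
    field_simp
    linarith
  -- the function h z = U z + (A/v) * exp (-(v z))
  set A : ℝ := deriv U 0 with hA_def
  have hexpneg : ∀ y : ℝ,
      HasDerivAt (fun z : ℝ => Real.exp (-(v * z))) (-v * Real.exp (-(v * y))) y := by
    intro y
    have h := (((hasDerivAt_id y).const_mul v).neg).exp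
    simpa [mul_comm] using h
  set hfn : ℝ → ℝ := fun z => U z + (A / v) * Real.exp (-(v * z)) with hhfn_def
  have hhc : Continuous hfn := by
    apply hUc.add
    exact continuous_const.mul (Real.continuous_exp.comp (continuous_const.mul continuous_id).neg)
  have hhd : ∀ y : ℝ, 0 < y → HasDerivAt hfn 0 y := by
    intro y hy
    have hd := (hUd y).add ((hexpneg y).const_mul (A / v))
    refine hd.congr_deriv ?_
    rw [hU'formula y hy.le]
    field_simp
    ring
  have hhconst : ∀ y : ℝ, 0 ≤ y → hfn y = hfn 0 := ptw_aux_const_on_Ici hhc hhd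
  have hexp_top : Tendsto (fun y : ℝ => Real.exp (-(v * y))) atTop (𝓝 0) := by
    apply Real.tendsto_exp_atBot.comp
    have h1 : Tendsto (fun y : ℝ => v * y) atTop atTop := tendsto_id.const_mul_atTop hv
    exact tendsto_neg_atTop_atBot.comp h1
  have hh_top : Tendsto hfn atTop (𝓝 (0 + A / v * 0)) := htop.add (hexp_top.const_mul (A / v))
  have hh_const_top : Tendsto hfn atTop (𝓝 (hfn 0)) := by
    refine Tendsto.congr' ?_ tendsto_const_nhds
    filter_upwards [eventually_ge_atTop (0:ℝ)] with y hy
    exact (hhconst y hy).symm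
  have hh0 : hfn 0 = uc + A / v := by simp [hhfn_def, hU0]
  have hkey : uc + A / v = 0 := by
    have h := tendsto_nhds_unique hh_const_top hh_top
    rw [hh0] at h; linarith [h]
  have hA : A = -(v * uc) := by
    field_simp at hkey; linarith
  have hU'0neg : deriv U 0 < 0 := by
    rw [← hA_def, hA]
    have : 0 < v * uc := mul_pos hv huc0
    linarith
  have hUformula : ∀ y : ℝ, 0 ≤ y → U y = uc * Real.exp (-(v * y)) := by
    intro y hy
    have h1 := (hhconst y hy).trans hh0
    simp only [hhfn_def] at h1
    have h2 : A / v = -uc := by rw [hA]; field_simp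
    rw [h2] at h1
    linarith
  ------------------------------------------------------------------
  -- PART 2 : behaviour on (-∞, 0)
  ------------------------------------------------------------------
  have hcutnn : ∀ y : ℝ, y < 0 → 0 ≤ cutoff f uc (U y) := by
    intro y hy
    obtain ⟨hl, hr⟩ := hneg y hy
    unfold cutoff
    split_ifs with hcase
    · rcases lt_or_eq_of_le hr with h' | h'
      · exact (hfpos (U y) (lt_trans huc0 hcase) h').1.le
      · rw [h', hf1]
    · exact le_rfl
  have hganti : AntitoneOn gf (Set.Iic 0) := by
    apply antitoneOn_of_deriv_nonpos (convex_Iic 0) hgc.continuousOn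
    · intro x hx
      rw [interior_Iic] at hx
      exact (hgd x hx.ne).differentiableAt.differentiableWithinAt
    · intro x hx
      rw [interior_Iic] at hx
      rw [(hgd x hx.ne).deriv]
      have := mul_nonneg (Real.exp_pos (v*x)).le (hcutnn x hx)
      linarith
  have key2a : ∀ y0 : ℝ, y0 < 0 → 0 ≤ deriv U y0 → ∀ z : ℝ, z ≤ y0 → U z = 1 := by
    intro y0 hy0 hd0
    have hU'nn : ∀ z : ℝ, z ≤ y0 → 0 ≤ deriv U z := by
      intro z hz
      have hgz := hganti (Set.mem_Iic.2 (hz.trans hy0.le)) (Set.mem_Iic.2 hy0.le) hz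
      have hgy0 : 0 ≤ gf y0 := mul_nonneg (Real.exp_pos _).le hd0
      have h2 : 0 ≤ Real.exp (v * z) * deriv U z := le_trans hgy0 hgz
      nlinarith [Real.exp_pos (v * z)]
    have hmono : MonotoneOn U (Set.Iic y0) := by
      apply monotoneOn_of_deriv_nonneg (convex_Iic y0) hUc.continuousOn
      · exact fun x _ => (hUd x).differentiableAt.differentiableWithinAt
      · intro x hx
        rw [interior_Iic] at hx
        exact hU'nn x hx.le
    intro z hz
    refine le_antisymm (hneg z (lt_of_le_of_lt hz hy0)).2 ?_
    refine le_of_tendsto hbot ?_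
    filter_upwards [eventually_le_atBot z] with w hw
    exact hmono (Set.mem_Iic.2 (hw.trans hz)) (Set.mem_Iic.2 hz) hw
  -- Lipschitz bound for f near 1
  obtain ⟨L, t, ht, hL⟩ := (hfC1.contDiffAt (x := 1)).exists_lipschitzOnWith
  obtain ⟨ε1, hε1pos, hball⟩ := Metric.mem_nhds_iff.1 ht
  set ε0 : ℝ := min (ε1 / 2) ((1 - uc) / 2) with hε0_def
  have hε0pos : 0 < ε0 := lt_min (by linarith) (by linarith)
  have hε0uc : uc < 1 - ε0 := by
    have h1 : ε0 ≤ (1 - uc) / 2 := min_le_right _ _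
    linarith
  have hflip : ∀ u : ℝ, |u - 1| ≤ ε0 → |f u| ≤ (L : ℝ) * |u - 1| := by
    intro u hu
    have h1 : ε0 ≤ ε1 / 2 := min_le_left _ _
    have hu1 : u ∈ Metric.ball (1:ℝ) ε1 := by
      rw [Metric.mem_ball, Real.dist_eq]
      linarith
    have hc1 : (1:ℝ) ∈ Metric.ball (1:ℝ) ε1 := Metric.mem_ball_self hε1pos
    have h2 := hL.dist_le_mul u (hball hu1) 1 (hball hc1)
    rw [Real.dist_eq, Real.dist_eq, hf1] at h2
    simpa using h2
  -- local extension of the constant solution 1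
  have local_ext : ∀ y1 : ℝ, y1 < 0 → U y1 = 1 → deriv U y1 = 0 →
      ∃ δ : ℝ, 0 < δ ∧ y1 + δ < 0 ∧ ∀ z ∈ Set.Icc y1 (y1 + δ), U z = 1 := by
    intro y1 hy1 hUy1 hU'y1
    have hcont : U ⁻¹' Metric.ball 1 ε0 ∈ 𝓝 y1 := by
      apply hUc.continuousAt.preimage_mem_nhds
      rw [hUy1]
      exact Metric.ball_mem_nhds _ hε0pos
    obtain ⟨δ1, hδ1pos, hδ1⟩ := Metric.mem_nhds_iff.1 hcont
    set δ : ℝ := min (δ1 / 2) (-y1 / 2) with hδ_def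
    have hδpos : 0 < δ := lt_min (by linarith) (by linarith)
    have hδ1' : δ ≤ δ1 / 2 := min_le_left _ _
    have hbneg : y1 + δ < 0 := by
      have h1 : δ ≤ -y1 / 2 := min_le_right _ _
      linarith
    refine ⟨δ, hδpos, hbneg, ?_⟩
    have hUnear : ∀ z ∈ Set.Icc y1 (y1 + δ), |U z - 1| ≤ ε0 := by
      intro z hz
      have hz1 : z ∈ Metric.ball y1 δ1 := by
        rw [Metric.mem_ball, Real.dist_eq, abs_lt]
        constructor <;> [linarith [hz.1]; linarith [hz.2]]
      have h2 := hδ1 hz1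
      rw [Set.mem_preimage, Metric.mem_ball, Real.dist_eq] at h2
      exact h2.le
    have hUgt : ∀ z ∈ Set.Icc y1 (y1 + δ), uc < U z := by
      intro z hz
      have h1 := hUnear z hz
      rw [abs_le] at h1
      linarith [h1.1]
    set γ : ℝ → ℝ × ℝ := fun s => (U s - 1, deriv U s) with hγ_def
    set K : ℝ := 1 + v + (L : ℝ) with hK_def
    have hLnn : (0:ℝ) ≤ (L : ℝ) := L.coe_nonneg
    have hcont2 : ContinuousOn γ (Set.Icc y1 (y1 + δ)) :=
      ((hUc.sub continuous_const).prodMk hU'c).continuousOn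
    have hderiv2 : ∀ s ∈ Set.Ico y1 (y1 + δ),
        HasDerivWithinAt γ ((deriv U s, deriv (deriv U) s)) (Set.Ici s) s := by
      intro s hs
      have hsne : s ≠ 0 := ne_of_lt (lt_trans hs.2 hbneg)
      exact (((hUd s).sub_const 1).prodMk (hD2 s hsne)).hasDerivWithinAt
    have hinit : ‖γ y1‖ ≤ 0 := by
      simp [hγ_def, hUy1, hU'y1, Prod.norm_def]
    have hbound : ∀ s ∈ Set.Ico y1 (y1 + δ),
        ‖((deriv U s, deriv (deriv U) s) : ℝ × ℝ)‖ ≤ K * ‖γ s‖ + 0 := by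
      intro s hs
      have hsneg : s < 0 := lt_trans hs.2 hbneg
      have hsmem : s ∈ Set.Icc y1 (y1 + δ) := ⟨hs.1, hs.2.le⟩
      have hode := hODE s hsneg.ne
      have hcut : cutoff f uc (U s) = f (U s) := if_pos (hUgt s hsmem)
      have hUU : |U s - 1| ≤ ε0 := hUnear s hsmem
      have hfb : |f (U s)| ≤ (L : ℝ) * |U s - 1| := hflip _ hUU
      have hU'' : deriv (deriv U) s = -(v * deriv U s) - f (U s) := by
        rw [hcut] at hode; linarith
      have hmaxnn : 0 ≤ max |U s - 1| |deriv U s| :=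
        le_trans (abs_nonneg _) (le_max_left _ _)
      have h1 : |U s - 1| ≤ max |U s - 1| |deriv U s| := le_max_left _ _
      have h2 : |deriv U s| ≤ max |U s - 1| |deriv U s| := le_max_right _ _
      have h3 : |deriv (deriv U) s| ≤ v * |deriv U s| + (L : ℝ) * |U s - 1| := by
        rw [hU'']
        calc |-(v * deriv U s) - f (U s)| = |(-(v * deriv U s)) + (-(f (U s)))| := by
              ring_nf
          _ ≤ |(-(v * deriv U s))| + |(-(f (U s)))| := abs_add_le _ _
          _ = v * |deriv U s| + |f (U s)| := by
              rw [abs_neg, abs_neg, abs_mul, abs_of_pos hv]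
          _ ≤ v * |deriv U s| + (L : ℝ) * |U s - 1| := by linarith
      rw [Prod.norm_def]
      simp only [hγ_def, Prod.norm_def, Real.norm_eq_abs, add_zero]
      have hK1 : (1:ℝ) ≤ K := by rw [hK_def]; linarith
      apply max_le
      · calc |deriv U s| ≤ max |U s - 1| |deriv U s| := h2
          _ ≤ K * max |U s - 1| |deriv U s| := le_mul_of_one_le_left hmaxnn hK1
      · have h4 := mul_le_mul_of_nonneg_left h2 hv.le
        have h5 := mul_le_mul_of_nonneg_left h1 hLnn
        rw [hK_def]
        nlinarith [h3, h4, h5, hmaxnn]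
    have hgron := norm_le_gronwallBound_of_norm_deriv_right_le
      (f := γ) (f' := fun s => ((deriv U s, deriv (deriv U) s) : ℝ × ℝ))
      (δ := 0) (K := K) (ε := 0) (a := y1) (b := y1 + δ)
      hcont2 hderiv2 hinit hbound
    intro z hz
    have hgz := hgron z hz
    rw [gronwallBound_ε0, zero_mul] at hgz
    have h1 : |U z - 1| ≤ ‖γ z‖ := by
      rw [hγ_def, Prod.norm_def]
      simp only [Real.norm_eq_abs]
      exact le_max_left _ _
    have h2 : |U z - 1| ≤ 0 := le_trans h1 hgz
    have h3 : U z - 1 = 0 := abs_eq_zero.1 (le_antisymm h2 (abs_nonneg _))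
    linarith
  -- negativity of U' on (-∞,0)
  have hneg' : ∀ y : ℝ, y < 0 → deriv U y < 0 := by
    by_contra hcon
    push_neg at hcon
    obtain ⟨y0, hy0, hd0⟩ := hcon
    have hIic : ∀ z : ℝ, z ≤ y0 → U z = 1 := key2a y0 hy0 hd0
    set T : Set ℝ := {y | y ∈ Set.Icc y0 0 ∧ ∀ z ∈ Set.Icc y0 y, U z = 1} with hT_def
    have hy0T : y0 ∈ T := ⟨⟨le_rfl, hy0.le⟩, fun z hz => hIic z hz.2⟩
    have hTne : T.Nonempty := ⟨y0, hy0T⟩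
    have hTbdd : BddAbove T := ⟨0, fun y hy => hy.1.2⟩
    set y1 : ℝ := sSup T with hy1_def
    have hy0y1 : y0 ≤ y1 := le_csSup hTbdd hy0T
    have hy1le : y1 ≤ 0 := csSup_le hTne fun y hy => hy.1.2
    have hlt : ∀ z : ℝ, z < y1 → U z = 1 := by
      intro z hz
      rcases le_or_gt z y0 with h | h
      · exact hIic z h
      · obtain ⟨w, hwT, hzw⟩ := exists_lt_of_lt_csSup hTne hz
        exact hwT.2 z ⟨h.le, hzw.le⟩
    have hUy1 : U y1 = 1 := by
      rcases eq_or_lt_of_le hy0y1 with h | h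
      · rw [← h]; exact hIic y0 le_rfl
      · have h1 : Tendsto U (𝓝[<] y1) (𝓝 (U y1)) := hUc.continuousAt.continuousWithinAt
        have h2 : Tendsto U (𝓝[<] y1) (𝓝 1) := by
          refine Tendsto.congr' ?_ tendsto_const_nhds
          filter_upwards [self_mem_nhdsWithin] with z hz
          exact (hlt z hz).symm
        exact tendsto_nhds_unique h1 h2
    have hy1neg : y1 < 0 := by
      rcases lt_or_eq_of_le hy1le with h | h
      · exact h
      · exfalso
        rw [h, hU0] at hUy1
        linarith
    have hU'y1 : deriv U y1 = 0 := by
      have hzero : ∀ z : ℝ, z < y1 → deriv U z = 0 := by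
        intro z hz
        have hev : U =ᶠ[𝓝 z] fun _ => (1:ℝ) :=
          Filter.eventuallyEq_of_mem (Iio_mem_nhds hz) (fun w hw => hlt w hw)
        rw [hev.deriv_eq]
        simp
      have h1 : Tendsto (deriv U) (𝓝[<] y1) (𝓝 (deriv U y1)) :=
        hU'c.continuousAt.continuousWithinAt
      have h2 : Tendsto (deriv U) (𝓝[<] y1) (𝓝 0) := by
        refine Tendsto.congr' ?_ tendsto_const_nhds
        filter_upwards [self_mem_nhdsWithin] with z hz
        exact (hzero z hz).symm
      exact tendsto_nhds_unique h1 h2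
    obtain ⟨δ, hδpos, hbneg, hext⟩ := local_ext y1 hy1neg hUy1 hU'y1
    have hmem : y1 + δ ∈ T := by
      refine ⟨⟨by linarith, by linarith⟩, ?_⟩
      intro z hz
      rcases lt_or_ge z y1 with h | h
      · exact hlt z h
      · exact hext z ⟨h, hz.2⟩
    have := le_csSup hTbdd hmem
    linarith
  ------------------------------------------------------------------
  -- PART 3 : assembly
  ------------------------------------------------------------------
  have hU'neg : ∀ y : ℝ, deriv U y < 0 := by
    intro y
    rcases lt_trichotomy y 0 with h | h | h
    · exact hneg' y h
    · rw [h]; exact hU'0neg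
    · rw [hU'formula y h.le]
      exact mul_neg_of_neg_of_pos hU'0neg (Real.exp_pos _)
  refine ⟨strictAnti_of_deriv_neg hU'neg, hU'neg, ?_⟩
  intro y
  rcases lt_trichotomy y 0 with h | h | h
  · constructor
    · linarith [(hneg y h).1]
    · rcases lt_or_eq_of_le (hneg y h).2 with h' | h'
      · exact h'
      · exfalso
        have hmax : IsLocalMax U y := by
          have : ∀ᶠ z in 𝓝 y, U z ≤ U y := by
            filter_upwards [Iio_mem_nhds h] with z hz
            rw [h']
            exact (hneg z hz).2
          exact this
        have := hmax.deriv_eq_zero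
        linarith [hU'neg y]
  · rw [h, hU0]; exact ⟨huc0, huc1⟩
  · rw [hUformula y h.le]
    have hel : Real.exp (-(v * y)) < 1 := by
      rw [Real.exp_lt_one_iff]
      nlinarith [mul_pos hv h]
    have hep : 0 < Real.exp (-(v * y)) := Real.exp_pos _
    constructor
    · positivity
    · nlinarith
end

section
/- Let u_c be in (0,1) and let f be a KPP reaction function. Then the unique propagation speed satisfies the upper bound v*(u_c) ≤ v_c(u_c), where v_c(u_c) = ( (1/u_c) · sup_{γ ∈ (u_c, 1]} f(γ) )^{1/2}; equivalently, no permanent form travelling wave solution with cut-off u_c exists with speed v > v_c(u_c). -/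
open Real Filter Topology

/-- Upper bound for the propagation speed: `v ≤ v_c u_c`. -/
theorem ptw_speed_upper_bound (f : ℝ → ℝ) (hf : IsKPP f) (uc : ℝ)
    (huc : uc ∈ Set.Ioo (0:ℝ) 1) (v : ℝ) (hv : 0 ≤ v) (U : ℝ → ℝ) (hU : IsPTW f uc v U) :
    v ≤ Real.sqrt ((1 / uc) * sSup (f '' Set.Ioc uc 1)) := by
  obtain ⟨hU1, hU2, hODE, hU0, hneg, hpos, hbot, htop⟩ := hU
  by_contra hcon
  push_neg at hcon
  set M := sSup (f '' Set.Ioc uc 1) with hMdef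
  have hbdd : BddAbove (f '' Set.Ioc uc 1) := by
    refine ⟨1, ?_⟩
    rintro x ⟨u, hu, rfl⟩
    rcases eq_or_lt_of_le hu.2 with h1 | h1
    · rw [h1, hf.2.2.1]; norm_num
    · exact le_trans (hf.2.2.2.2.2.1 u (lt_trans huc.1 hu.1) h1).2 hu.2
  have hM0 : 0 ≤ M := by
    have h1 : f 1 ∈ f '' Set.Ioc uc 1 := ⟨1, ⟨huc.2, le_rfl⟩, rfl⟩
    have h2 := le_csSup hbdd h1
    rwa [hf.2.2.1] at h2
  have hMle : ∀ u ∈ Set.Ioc uc 1, f u ≤ M := fun u hu => le_csSup hbdd ⟨u, hu, rfl⟩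
  have hv0 : 0 < v := lt_of_le_of_lt (Real.sqrt_nonneg _) hcon
  have hucpos := huc.1
  have hvM : M < v ^ 2 * uc := by
    have hx : (0:ℝ) ≤ (1/uc) * M := by positivity
    have h1 : (1/uc) * M < v^2 := by
      nlinarith [Real.sq_sqrt hx, Real.sqrt_nonneg ((1/uc)*M)]
    rw [div_mul_eq_mul_div, one_mul, div_lt_iff₀ hucpos] at h1
    nlinarith [h1]
  set c := v * uc - M / v with hcdef
  have hc : 0 < c := by
    rw [hcdef, sub_pos, div_lt_iff₀ hv0]
    nlinarith
  have hUd : Differentiable ℝ U := hU1.differentiable one_ne_zero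
  have hU'c : Continuous (deriv U) := hU1.continuous_deriv le_rfl
  have hdiff2 : ∀ y : ℝ, y ≠ 0 → DifferentiableAt ℝ (deriv U) y := by
    intro y hy
    obtain ⟨u, hu, hcd⟩ := (hU2 y hy).contDiffOn (m := 2) le_rfl (by simp)
    obtain ⟨t, hts, hto, hyt⟩ := mem_nhds_iff.mp hu
    have h1 : ContDiffOn ℝ 1 (deriv U) t := (hcd.mono hts).deriv_of_isOpen hto (by norm_num)
    exact (h1.differentiableOn one_ne_zero).differentiableAt (hto.mem_nhds hyt)
  set g : ℝ → ℝ := fun s => Real.exp (v*s) * deriv U s with hgdef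
  have hgc : Continuous g :=
    (Real.continuous_exp.comp (continuous_const.mul continuous_id)).mul hU'c
  have hKey : ∀ x : ℝ, x ≠ 0 →
      HasDerivAt g (-(Real.exp (v*x) * cutoff f uc (U x))) x := by
    intro x hx
    have he : HasDerivAt (fun s => Real.exp (v*s)) (Real.exp (v*x) * v) x := by
      simpa using ((hasDerivAt_id x).const_mul v).exp
    have hd := (hdiff2 x hx).hasDerivAt
    have h1 : HasDerivAt (fun s => Real.exp (v*s) * deriv U s) _ x := he.mul hd
    have h2 : deriv (deriv U) x = -(v * deriv U x) - cutoff f uc (U x) := by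
      linarith [hODE x hx]
    rw [hgdef]
    convert h1 using 1
    rw [h2]; ring
  -- g is constant on [0, ∞)
  have hcut0 : ∀ s : ℝ, 0 < s → cutoff f uc (U s) = 0 := by
    intro s hs
    have h1 := (hpos s hs).2
    simp [cutoff, not_lt.mpr h1]
  have hconst : ∀ y : ℝ, 0 ≤ y → g y = g 0 := by
    intro y hy
    rcases eq_or_lt_of_le hy with h | hy'
    · rw [← h]
    · have hdiffOn : ∀ x ∈ interior (Set.Icc (0:ℝ) y), DifferentiableWithinAt ℝ g (interior (Set.Icc (0:ℝ) y)) x := by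
        intro x hx
        rw [interior_Icc] at hx
        exact (hKey x (ne_of_gt hx.1)).differentiableAt.differentiableWithinAt
      have hder0 : ∀ x ∈ interior (Set.Icc (0:ℝ) y), deriv g x = 0 := by
        intro x hx
        rw [interior_Icc] at hx
        rw [(hKey x (ne_of_gt hx.1)).deriv, hcut0 x hx.1]
        simp
      have hmono : MonotoneOn g (Set.Icc 0 y) :=
        monotoneOn_of_deriv_nonneg (convex_Icc 0 y) hgc.continuousOn hdiffOn
          (fun x hx => le_of_eq (hder0 x hx).symm)
      have hanti : AntitoneOn g (Set.Icc 0 y) :=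
        antitoneOn_of_deriv_nonpos (convex_Icc 0 y) hgc.continuousOn hdiffOn
          (fun x hx => le_of_eq (hder0 x hx))
      exact le_antisymm
        (hanti (Set.left_mem_Icc.mpr hy) (Set.right_mem_Icc.mpr hy) hy)
        (hmono (Set.left_mem_Icc.mpr hy) (Set.right_mem_Icc.mpr hy) hy)
  set d0 := deriv U 0 with hd0def
  have hg0 : g 0 = d0 := by simp [hgdef, hd0def]
  have hU'for : ∀ y : ℝ, 0 ≤ y → deriv U y = d0 * Real.exp (-(v*y)) := by
    intro y hy
    have h1 : Real.exp (v*y) * deriv U y = d0 := by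
      rw [← hg0]; exact hconst y hy
    rw [Real.exp_neg]
    field_simp
    linear_combination h1
  -- determine d0 from the limit at +∞
  have hpsi : ∀ y : ℝ, 0 ≤ y → U y + (d0/v) * Real.exp (-(v*y)) = uc + d0/v := by
    intro y hy
    rcases eq_or_lt_of_le hy with h | hy'
    · rw [← h]; simp [hU0]
    · have hψc : Continuous (fun s => U s + (d0/v) * Real.exp (-(v*s))) :=
        hU1.continuous.add (continuous_const.mul
          (Real.continuous_exp.comp (continuous_const.mul continuous_id).neg))
      have hψd : ∀ x : ℝ, 0 < x →
          HasDerivAt (fun s => U s + (d0/v) * Real.exp (-(v*s))) 0 x := by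
        intro x hx
        have h1 : HasDerivAt (fun s => Real.exp (-(v*s))) (Real.exp (-(v*x)) * (-v)) x := by
          simpa using (((hasDerivAt_id x).const_mul v).neg).exp
        have h2 : HasDerivAt (fun s => U s + (d0/v) * Real.exp (-(v*s))) _ x :=
          (hUd x).hasDerivAt.add (h1.const_mul (d0/v))
        convert h2 using 1
        rw [hU'for x hx.le]
        field_simp
        ring
      have hdiffOn : ∀ x ∈ interior (Set.Icc (0:ℝ) y),
          DifferentiableWithinAt ℝ (fun s => U s + (d0/v) * Real.exp (-(v*s))) (interior (Set.Icc (0:ℝ) y)) x := by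
        intro x hx
        rw [interior_Icc] at hx
        exact (hψd x hx.1).differentiableAt.differentiableWithinAt
      have hder0 : ∀ x ∈ interior (Set.Icc (0:ℝ) y),
          deriv (fun s => U s + (d0/v) * Real.exp (-(v*s))) x = 0 := by
        intro x hx
        rw [interior_Icc] at hx
        exact (hψd x hx.1).deriv
      have hmono := monotoneOn_of_deriv_nonneg (convex_Icc (0:ℝ) y) hψc.continuousOn hdiffOn
          (fun x hx => le_of_eq (hder0 x hx).symm)
      have hanti := antitoneOn_of_deriv_nonpos (convex_Icc (0:ℝ) y) hψc.continuousOn hdiffOn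
          (fun x hx => le_of_eq (hder0 x hx))
      have heq : (fun s => U s + (d0/v) * Real.exp (-(v*s))) y
          = (fun s => U s + (d0/v) * Real.exp (-(v*s))) 0 :=
        le_antisymm
          (hanti (Set.left_mem_Icc.mpr hy) (Set.right_mem_Icc.mpr hy) hy)
          (hmono (Set.left_mem_Icc.mpr hy) (Set.right_mem_Icc.mpr hy) hy)
      simp only [hU0] at heq
      simpa using heq
  have hexp : Tendsto (fun y : ℝ => Real.exp (-(v*y))) atTop (𝓝 0) := by
    apply Real.tendsto_exp_atBot.comp
    exact tendsto_neg_atTop_atBot.comp (tendsto_id.const_mul_atTop hv0)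
  have hlim : Tendsto U atTop (𝓝 (uc + d0/v)) := by
    have h1 : Tendsto (fun y : ℝ => uc + d0/v - (d0/v) * Real.exp (-(v*y))) atTop
        (𝓝 (uc + d0/v - (d0/v) * 0)) := tendsto_const_nhds.sub (hexp.const_mul (d0/v))
    have h2 : ∀ᶠ y in atTop, uc + d0/v - (d0/v) * Real.exp (-(v*y)) = U y := by
      filter_upwards [eventually_ge_atTop (0:ℝ)] with y hy
      linarith [hpsi y hy]
    simpa using h1.congr' h2
  have hd0v : d0 = -(v * uc) := by
    have h3 : uc + d0 / v = 0 := tendsto_nhds_unique hlim htop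
    field_simp at h3
    linear_combination h3
  -- bound on g for y < 0
  have hfcle : ∀ s : ℝ, s < 0 → cutoff f uc (U s) ≤ M := by
    intro s hs
    rcases hneg s hs with ⟨h1, h2⟩
    unfold cutoff
    split_ifs with hlt
    · exact hMle (U s) ⟨hlt, h2⟩
    · exact hM0
  have hstep5 : ∀ y : ℝ, y < 0 → g y ≤ -(v*uc) + M/v := by
    intro y hy
    have hφc : Continuous (fun s => g s + (M/v) * Real.exp (v*s)) :=
      hgc.add (continuous_const.mul
        (Real.continuous_exp.comp (continuous_const.mul continuous_id)))
    have hφd : ∀ x : ℝ, x < 0 → HasDerivAt (fun s => g s + (M/v) * Real.exp (v*s))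
        (Real.exp (v*x) * (M - cutoff f uc (U x))) x := by
      intro x hx
      have he : HasDerivAt (fun s => Real.exp (v*s)) (Real.exp (v*x) * v) x := by
        simpa using ((hasDerivAt_id x).const_mul v).exp
      have h1 : HasDerivAt (fun s => g s + (M/v) * Real.exp (v*s)) _ x :=
        (hKey x hx.ne).add (he.const_mul (M/v))
      convert h1 using 1
      field_simp
      ring
    have hdiffOn : ∀ x ∈ interior (Set.Icc y (0:ℝ)),
        DifferentiableWithinAt ℝ (fun s => g s + (M/v) * Real.exp (v*s)) (interior (Set.Icc y (0:ℝ))) x := by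
      intro x hx
      rw [interior_Icc] at hx
      exact (hφd x hx.2).differentiableAt.differentiableWithinAt
    have hdernn : ∀ x ∈ interior (Set.Icc y (0:ℝ)),
        0 ≤ deriv (fun s => g s + (M/v) * Real.exp (v*s)) x := by
      intro x hx
      rw [interior_Icc] at hx
      rw [(hφd x hx.2).deriv]
      have := hfcle x hx.2
      have := Real.exp_pos (v*x)
      nlinarith
    have hmono := monotoneOn_of_deriv_nonneg (convex_Icc y (0:ℝ)) hφc.continuousOn hdiffOn hdernn
    have h7 := hmono (Set.left_mem_Icc.mpr hy.le) (Set.right_mem_Icc.mpr hy.le) hy.le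
    simp only at h7
    have hg0' : g 0 + (M/v) * Real.exp (v*0) = -(v*uc) + M/v := by
      rw [hg0, hd0v]; simp
    rw [hg0'] at h7
    have hexpnn : 0 ≤ (M/v) * Real.exp (v*y) := by positivity
    linarith
  -- U' ≤ -c on (-∞, 0)
  have hU'neg : ∀ s : ℝ, s < 0 → deriv U s ≤ -c := by
    intro s hs
    have h5 : g s ≤ -c := by
      have := hstep5 s hs
      rw [hcdef]
      linarith
    have he1 : Real.exp (v*s) ≤ 1 :=
      Real.exp_le_one_iff.mpr (by nlinarith)
    have he0 : 0 < Real.exp (v*s) := Real.exp_pos _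
    have hgs : Real.exp (v*s) * deriv U s ≤ -c := h5
    nlinarith [hgs, he1, he0, hc]
  -- contradiction at y0 = (uc - 2)/c
  set y0 := (uc - 2)/c with hy0def
  have hy0neg : y0 < 0 := div_neg_of_neg_of_pos (by linarith [huc.2]) hc
  have hχc : Continuous (fun s => U s + c * s) :=
    hU1.continuous.add (continuous_const.mul continuous_id)
  have hχd : ∀ x : ℝ, HasDerivAt (fun s => U s + c * s) (deriv U x + c) x := by
    intro x
    have h1 : HasDerivAt (fun s => U s + c * s) _ x :=
      (hUd x).hasDerivAt.add ((hasDerivAt_id x).const_mul c)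
    simpa using h1
  have hanti : AntitoneOn (fun s => U s + c * s) (Set.Icc y0 0) := by
    apply antitoneOn_of_deriv_nonpos (convex_Icc y0 0) hχc.continuousOn
    · intro x hx
      exact (hχd x).differentiableAt.differentiableWithinAt
    · intro x hx
      rw [interior_Icc] at hx
      rw [(hχd x).deriv]
      linarith [hU'neg x hx.2]
  have h7 := hanti (Set.left_mem_Icc.mpr hy0neg.le) (Set.right_mem_Icc.mpr hy0neg.le) hy0neg.le
  simp only [hU0, mul_zero, add_zero] at h7
  have hcy0 : c * y0 = uc - 2 := by
    rw [hy0def]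
    field_simp
  have hle1 := (hneg y0 hy0neg).2
  linarith [h7, hle1, hcy0]
end

section
/- Let u_c be in (0,1) and let f be a KPP reaction function. Then there is no permanent form travelling wave solution with cut-off u_c and speed v = 0. -/
open Real Filter Topology

/-- There is no permanent form travelling wave with speed `v = 0`. -/
theorem ptw_no_zero_speed (f : ℝ → ℝ) (hf : IsKPP f) (uc : ℝ)
    (huc : uc ∈ Set.Ioo (0:ℝ) 1) :
    ∀ U : ℝ → ℝ, ¬ IsPTW f uc 0 U := by
  rintro U ⟨hC1, hC2, hode, hU0, _hneg, hpos, _hbot, htop⟩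
  -- deriv U is differentiable at each y > 0, with derivative (deriv (deriv U)) y
  have hdiff2 : ∀ y : ℝ, 0 < y → DifferentiableAt ℝ (deriv U) y := by
    intro y hy
    obtain ⟨u, hu, hcd⟩ := (hC2 y hy.ne').contDiffOn (le_refl 2) (by simp)
    have hio : interior u ∈ 𝓝 y := interior_mem_nhds.2 hu
    have hcd' : ContDiffOn ℝ 2 U (interior u) := hcd.mono interior_subset
    have := hcd'.deriv_of_isOpen isOpen_interior (by norm_num : (1:WithTop ℕ∞)+1 ≤ 2)
    exact ((this.differentiableOn (by norm_num)) y (mem_of_mem_nhds hio)).differentiableAt hio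
  -- on (0, ∞), deriv (deriv U) = 0
  have hdd0 : ∀ y : ℝ, 0 < y → deriv (deriv U) y = 0 := by
    intro y hy
    have h := hode y hy.ne'
    have hcut : cutoff f uc (U y) = 0 := by
      have : ¬ uc < U y := not_lt.2 (hpos y hy).2
      simp [cutoff, this]
    rw [hcut, zero_mul] at h
    linarith
  -- deriv U has derivative zero on Ioi 0, so it is constant there
  have hconst : ∀ x y : ℝ, 0 < x → 0 < y → deriv U x = deriv U y := by
    intro x y hx hy
    have key := (convex_Ioi (0:ℝ)).norm_image_sub_le_of_norm_hasDerivWithin_le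
      (f := deriv U) (f' := fun z => deriv (deriv U) z)
      (fun z hz => ((hdiff2 z hz).hasDerivAt).hasDerivWithinAt)
      (C := 0) (fun z hz => by simp [hdd0 z hz]) hx hy
    have : ‖deriv U y - deriv U x‖ ≤ 0 := by simpa using key
    have := norm_le_zero_iff.1 this
    linarith [sub_eq_zero.1 this]
  set c := deriv U 1 with hc
  -- U is affine on Ioi 0 : U y = U 1 + c * (y - 1)
  have haff : ∀ y : ℝ, 0 < y → U y = U 1 + c * (y - 1) := by
    intro y hy
    have key := (convex_Ioi (0:ℝ)).norm_image_sub_le_of_norm_hasDerivWithin_le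
      (f := fun z => U z - c * z) (f' := fun z => deriv U z - c)
      (fun z hz => by
        have h := (((hC1.differentiable one_ne_zero z).hasDerivAt).sub
          ((hasDerivAt_id z).const_mul c)).hasDerivWithinAt (s := Set.Ioi 0)
        simp at h
        exact h)
      (C := 0) (fun z hz => by
        have hzc : deriv U z = c := hconst z 1 hz one_pos
        simp [hzc]) (Set.mem_Ioi.2 one_pos) (Set.mem_Ioi.2 hy)
    have h1 : ‖(U y - c * y) - (U 1 - c * 1)‖ ≤ 0 := by simpa using key
    have := norm_le_zero_iff.1 h1
    have := sub_eq_zero.1 this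
    ring_nf
    ring_nf at this
    linarith
  -- slope c = 0 : since U(y+1) - U(y) → 0 at +∞ and equals c eventually
  have hc0 : c = 0 := by
    have h1 : Tendsto (fun y : ℝ => U (y + 1) - U y) atTop (𝓝 (0 - 0)) :=
      (htop.comp (tendsto_atTop_add_const_right atTop 1 tendsto_id)).sub htop
    have h2 : (fun y : ℝ => U (y + 1) - U y) =ᶠ[atTop] fun _ => c := by
      filter_upwards [eventually_gt_atTop (0:ℝ)] with y hy
      rw [haff (y + 1) (by linarith), haff y hy]; ring
    have h3 : Tendsto (fun _ : ℝ => c) atTop (𝓝 (0 - 0)) := h1.congr' h2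
    simpa using (tendsto_nhds_unique h3 tendsto_const_nhds).symm
  -- then U ≡ U 1 on Ioi 0, and the limit at +∞ gives U 1 = 0
  have hU1 : U 1 = 0 := by
    have h2 : U =ᶠ[atTop] fun _ => U 1 := by
      filter_upwards [eventually_gt_atTop (0:ℝ)] with y hy
      rw [haff y hy, hc0]; ring
    have h3 : Tendsto (fun _ : ℝ => U 1) atTop (𝓝 0) := htop.congr' h2
    exact (tendsto_nhds_unique h3 tendsto_const_nhds).symm
  -- continuity at 0 from the right gives uc = 0, contradiction
  have hcont : Tendsto U (𝓝[>] (0:ℝ)) (𝓝 (U 0)) :=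
    (hC1.continuous.continuousAt.tendsto).mono_left nhdsWithin_le_nhds
  have h4 : U =ᶠ[𝓝[>] (0:ℝ)] fun _ => (0:ℝ) := by
    filter_upwards [self_mem_nhdsWithin] with y hy
    rw [haff y hy, hU1, hc0]; ring
  have h5 : Tendsto (fun _ : ℝ => (0:ℝ)) (𝓝[>] (0:ℝ)) (𝓝 (U 0)) := hcont.congr' h4
  have h6 : U 0 = 0 := tendsto_nhds_unique h5 tendsto_const_nhds
  rw [hU0] at h6
  exact absurd h6 (ne_of_gt huc.1)
end

section
/- Let u_c be in (0,1), let f be a KPP reaction function, let v ≥ 0, and let (α, β) : [0, ∞) → ℝ² be a solution of the planar system α' = β, β' = −vβ − f_c(α) with α(0) > 1 and β(0) > 0. Then α(y) > 1 and β(y) > 0 for all y ≥ 0; that is, the region D₋ = {(α, β) : α > 1, β > 0} is positively invariant for the system. -/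
open Real Filter Topology

/-- The region `{(a, b) : a > 1, b > 0}` is positively invariant for the
planar system `a' = b`, `b' = -v b - f_c a`. -/
theorem Dminus_positively_invariant (f : ℝ → ℝ) (hf : IsKPP f) (uc : ℝ)
    (huc : uc ∈ Set.Ioo (0:ℝ) 1) (v : ℝ) (hv : 0 ≤ v) (α β : ℝ → ℝ)
    (hα : ∀ y ∈ Set.Ici (0:ℝ), HasDerivWithinAt α (β y) (Set.Ici 0) y)
    (hβ : ∀ y ∈ Set.Ici (0:ℝ),
      HasDerivWithinAt β (-v * β y - cutoff f uc (α y)) (Set.Ici 0) y)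
    (h0α : 1 < α 0) (h0β : 0 < β 0) :
    ∀ y : ℝ, 0 ≤ y → 1 < α y ∧ 0 < β y := by
  intro y₀ hy₀
  by_contra hcon
  rw [not_and_or, not_lt, not_lt] at hcon
  obtain ⟨hf1, hf0, hf01, _, _, _, hfneg⟩ := hf
  have hαc : ContinuousOn α (Set.Ici 0) := fun y hy => (hα y hy).continuousWithinAt
  have hβc : ContinuousOn β (Set.Ici 0) := fun y hy => (hβ y hy).continuousWithinAt
  set S : Set ℝ := {t | t ∈ Set.Icc 0 y₀ ∧ (α t ≤ 1 ∨ β t ≤ 0)} with hS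
  have hSne : S.Nonempty := ⟨y₀, ⟨hy₀, le_refl _⟩, hcon⟩
  have hSbdd : BddBelow S := ⟨0, fun t ht => ht.1.1⟩
  have hSclosed : IsClosed S := by
    have h1 : S = (Set.Icc 0 y₀ ∩ α ⁻¹' Set.Iic 1) ∪ (Set.Icc 0 y₀ ∩ β ⁻¹' Set.Iic 0) := by
      ext t; simp [hS, Set.mem_Icc, and_or_left]
    rw [h1]
    exact ((hαc.mono (fun t ht => ht.1)).preimage_isClosed_of_isClosed isClosed_Icc
        isClosed_Iic).union
      ((hβc.mono (fun t ht => ht.1)).preimage_isClosed_of_isClosed isClosed_Icc isClosed_Iic)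
  set s := sInf S with hs
  have hsS : s ∈ S := hSclosed.csInf_mem hSne hSbdd
  have hs0 : 0 ≤ s := hsS.1.1
  have hsy : s ≤ y₀ := hsS.1.2
  have hbefore : ∀ t, 0 ≤ t → t < s → 1 < α t ∧ 0 < β t := by
    intro t ht hts
    by_contra h
    rw [not_and_or, not_lt, not_lt] at h
    exact absurd (csInf_le hSbdd ⟨⟨ht, hts.le.trans hsy⟩, h⟩) (not_le.mpr hts)
  have hspos : 0 < s := by
    rcases hs0.lt_or_eq with h | h
    · exact h
    · exfalso
      rcases hsS.2 with h1 | h1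
      · rw [← h] at h1; exact absurd h0α (not_lt.mpr h1)
      · rw [← h] at h1; exact absurd h0β (not_lt.mpr h1)
  -- α is strictly monotone on [0, s]
  have hαmono : StrictMonoOn α (Set.Icc 0 s) := by
    apply StrictMonoOn.mono ?_ (le_refl _)
    apply strictMonoOn_of_deriv_pos (convex_Icc (0:ℝ) s)
      (hαc.mono (fun t ht => ht.1))
    intro t ht
    rw [interior_Icc] at ht
    have hda : HasDerivAt α (β t) t :=
      (hα t ht.1.le).hasDerivAt (Ici_mem_nhds ht.1)
    rw [hda.deriv]
    exact (hbefore t ht.1.le ht.2).2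
  have hα1 : ∀ t ∈ Set.Icc (0:ℝ) s, 1 < α t := by
    intro t ht
    rcases ht.1.lt_or_eq with h | h
    · exact h0α.trans (hαmono ⟨le_refl 0, hspos.le⟩ ht h)
    · rw [← h]; exact h0α
  have hαs1 : 1 < α s := hα1 s ⟨hs0, le_refl _⟩
  have hβs : β s ≤ 0 := by
    rcases hsS.2 with h | h
    · exact absurd hαs1 (not_lt.mpr h)
    · exact h
  -- cutoff is negative on [0, s]
  have hcut : ∀ t ∈ Set.Icc (0:ℝ) s, cutoff f uc (α t) < 0 := by
    intro t ht
    have h1 := hα1 t ht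
    rw [cutoff, if_pos (huc.2.trans h1)]
    exact hfneg _ h1
  -- g t = β t * exp (v t) is monotone on [0, s]
  set g : ℝ → ℝ := fun t => β t * Real.exp (v * t) with hg
  have hgmono : MonotoneOn g (Set.Icc 0 s) := by
    apply MonotoneOn.mono ?_ (le_refl (Set.Icc 0 s))
    have hderiv : ∀ t ∈ Set.Ioo (0:ℝ) s,
        HasDerivAt g (-(cutoff f uc (α t)) * Real.exp (v * t)) t := by
      intro t ht
      have hdb : HasDerivAt β (-v * β t - cutoff f uc (α t)) t :=
        (hβ t ht.1.le).hasDerivAt (Ici_mem_nhds ht.1)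
      have hde : HasDerivAt (fun t => Real.exp (v * t)) (Real.exp (v * t) * v) t := by
        simpa using ((hasDerivAt_id t).const_mul v).exp
      have : HasDerivAt (fun y => β y * Real.exp (v * y))
          ((-v * β t - cutoff f uc (α t)) * Real.exp (v * t) + β t * (Real.exp (v * t) * v)) t :=
        hdb.mul hde
      convert this using 1
      ring
    apply monotoneOn_of_deriv_nonneg (convex_Icc (0:ℝ) s)
    · exact ((hβc.mono (fun t ht => ht.1)).mul
        ((Real.continuous_exp.comp (continuous_const.mul continuous_id)).continuousOn))
    · rw [interior_Icc]
      exact fun t ht => (hderiv t ht).differentiableAt.differentiableWithinAt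
    · rw [interior_Icc]
      intro t ht
      rw [(hderiv t ht).deriv]
      have h1 := hcut t ⟨ht.1.le, ht.2.le⟩
      have h2 := Real.exp_pos (v * t)
      nlinarith
  have hg0 : 0 < g 0 := by
    simp only [hg, mul_zero, Real.exp_zero, mul_one]
    exact h0β
  have hgs : g 0 ≤ g s := hgmono ⟨le_refl 0, hspos.le⟩ ⟨hs0, le_refl _⟩ hs0
  have : 0 < β s := by
    have h1 : 0 < β s * Real.exp (v * s) := lt_of_lt_of_le hg0 hgs
    nlinarith [Real.exp_pos (v * s)]
  exact absurd this (not_lt.mpr hβs)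
end
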